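/- arXiv:2401.12110 — 2 statements merged into one kernel-verified Lean document; each statement's English description precedes it below -/
import Mathlib

section
/- Let q ≥ 1 be an integer and let x ≠ 0 be real. Then −∑_{k=1}^∞ ψ(k/q) x^k / (k · Γ(k/q)) = (1/q) ∑_{h=0}^{q−1} (x^{−h} / Γ(1 − h/q)) · [ S(1 − h/q, x^q) − Q(1 − h/q, x^q) ], where Q(a, y) = ∑_{k=1}^∞ y^k ψ(k + a)/(a)_k and S(a, y) = ∑_{k=0}^∞ y^{k+1} / ((k + a) · (a)_{k+1}). (This is Theorem 2.6, the reduction formula for the derivative of the integral Mittag-Leffler function with respect to β at α = 1/q, β = 0.) -/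
open scoped BigOperators

/-- The digamma function `ψ(x) = Γ'(x)/Γ(x)`. -/
noncomputable def digamma (x : ℝ) : ℝ := deriv Real.Gamma x / Real.Gamma x

/-- `Q(a, y) = ∑_{k=1}^∞ y^k ψ(k + a) / (a)_k`, with `(a)_k` the Pochhammer symbol. -/
noncomputable def Q (a y : ℝ) : ℝ :=
  ∑' k : ℕ, y ^ (k + 1) * digamma (((k : ℝ) + 1) + a) / (ascPochhammer ℝ (k + 1)).eval a

/-- `S(a, y) = ∑_{k=0}^∞ y^{k+1} / ((k + a) (a)_{k+1})`. -/
noncomputable def S (a y : ℝ) : ℝ :=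
  ∑' k : ℕ, y ^ (k + 1) / (((k : ℝ) + a) * (ascPochhammer ℝ (k + 1)).eval a)

lemma gamma_ne_neg_nat {x : ℝ} (hx : 0 < x) : ∀ m : ℕ, x ≠ -m := by
  intro m h
  have : (0:ℝ) ≤ m := Nat.cast_nonneg m
  linarith [h ▸ hx]

lemma digamma_add_one {x : ℝ} (hx : 0 < x) : digamma (x + 1) = digamma x + 1 / x := by
  have hx1 : (0:ℝ) < x + 1 := by linarith
  have hd : DifferentiableAt ℝ Real.Gamma x := Real.differentiableAt_Gamma (gamma_ne_neg_nat hx)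
  have hd1 : DifferentiableAt ℝ Real.Gamma (x + 1) :=
    Real.differentiableAt_Gamma (gamma_ne_neg_nat hx1)
  have hA : HasDerivAt (fun t => Real.Gamma (t + 1)) (deriv Real.Gamma (x + 1)) x := by
    simpa [Function.comp_def] using (hd1.hasDerivAt.comp x ((hasDerivAt_id x).add_const 1))
  have hB : HasDerivAt (fun t => t * Real.Gamma t)
      (1 * Real.Gamma x + x * deriv Real.Gamma x) x :=
    (hasDerivAt_id x).mul hd.hasDerivAt
  have hEq : (fun t => Real.Gamma (t + 1)) =ᶠ[nhds x] fun t => t * Real.Gamma t := by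
    filter_upwards [eventually_ne_nhds hx.ne'] with t ht
    exact Real.Gamma_add_one ht
  have hA' : HasDerivAt (fun t => t * Real.Gamma t) (deriv Real.Gamma (x + 1)) x :=
    hA.congr_of_eventuallyEq hEq.symm
  have hder : deriv Real.Gamma (x + 1) = Real.Gamma x + x * deriv Real.Gamma x := by
    have := hA'.unique hB
    linarith
  have hΓ : Real.Gamma x ≠ 0 := (Real.Gamma_pos_of_pos hx).ne'
  rw [digamma, digamma, hder, Real.Gamma_add_one hx.ne']
  field_simp
  ring

lemma digamma_nat_add {a : ℝ} (ha : 0 < a) (n : ℕ) :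
    digamma (a + n) = digamma a + ∑ j ∈ Finset.range n, 1 / (a + j) := by
  induction n with
  | zero => simp
  | succ n ih =>
    have hpos : 0 < a + n := by positivity
    have h1 : (a : ℝ) + (n + 1 : ℕ) = (a + n) + 1 := by push_cast; ring
    rw [h1, digamma_add_one hpos, ih, Finset.sum_range_succ]
    ring

lemma abs_digamma_nat_add {a : ℝ} (ha : 0 < a) (n : ℕ) :
    |digamma (a + n)| ≤ |digamma a| + n / a := by
  rw [digamma_nat_add ha n]
  refine (abs_add_le _ _).trans ?_
  gcongr
  have h1 : |∑ j ∈ Finset.range n, 1 / (a + (j:ℝ))| ≤ ∑ j ∈ Finset.range n, |1 / (a + (j:ℝ))| :=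
    Finset.abs_sum_le_sum_abs _ _
  refine h1.trans ?_
  have h2 : ∑ j ∈ Finset.range n, |1 / (a + (j:ℝ))| ≤ ∑ j ∈ Finset.range n, 1 / a := by
    refine Finset.sum_le_sum fun j _ => ?_
    rw [abs_of_pos (by positivity)]
    gcongr
    · simp [Nat.cast_nonneg]
  simpa [div_eq_mul_inv] using h2

lemma poch_pos {a : ℝ} (ha : 0 < a) (n : ℕ) : 0 < (ascPochhammer ℝ n).eval a :=
  ascPochhammer_pos n a ha

lemma poch_ge {a : ℝ} (ha : 0 < a) (n : ℕ) :
    a * n.factorial ≤ (ascPochhammer ℝ (n + 1)).eval a := by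
  induction n with
  | zero => simp [ascPochhammer_succ_eval]
  | succ n ih =>
    rw [ascPochhammer_succ_eval]
    have h1 : ((n:ℝ) + 1) ≤ a + (n + 1 : ℕ) := by push_cast; linarith
    calc a * ((n+1).factorial : ℝ) = (a * n.factorial) * ((n:ℝ) + 1) := by
          rw [Nat.factorial_succ]; push_cast; ring
      _ ≤ (ascPochhammer ℝ (n+1)).eval a * (a + (n+1 : ℕ)) := by
          have := poch_pos ha (n+1)
          have h2 : (0:ℝ) ≤ a * n.factorial := by positivity
          exact mul_le_mul ih h1 (by positivity) (le_of_lt this)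

lemma Gamma_poch {a : ℝ} (ha : 0 < a) (n : ℕ) :
    Real.Gamma (a + n) = Real.Gamma a * (ascPochhammer ℝ n).eval a := by
  induction n with
  | zero => simp
  | succ n ih =>
    have h1 : (a : ℝ) + (n + 1 : ℕ) = (a + n) + 1 := by push_cast; ring
    rw [h1, Real.Gamma_add_one (by positivity), ih, ascPochhammer_succ_eval]
    ring

lemma summable_base (y : ℝ) : Summable (fun n : ℕ => (2 * |y|) ^ (n + 1) / n.factorial) := by
  have h := (Real.summable_pow_div_factorial (2 * |y|)).mul_left (2 * |y|)
  refine h.congr fun n => ?_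
  rw [pow_succ]
  ring

lemma np1_le : ∀ n : ℕ, ((n : ℝ) + 1) ≤ 2 ^ (n + 1) := by
  intro n
  have h2 : (2:ℝ) ^ n ≤ 2 ^ (n+1) := by
    have : (1:ℝ) ≤ 2 := by norm_num
    exact pow_le_pow_right₀ this (Nat.le_succ n)
  have : ((n:ℝ)) + 1 ≤ 2 ^ n := by exact_mod_cast n.lt_two_pow_self
  linarith

lemma summable_Qterm {a : ℝ} (ha : 0 < a) (y : ℝ) :
    Summable (fun k : ℕ =>
      y ^ (k + 1) * digamma (((k : ℝ) + 1) + a) / (ascPochhammer ℝ (k + 1)).eval a) := by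
  set C : ℝ := (|digamma a| + 1 / a) / a with hC
  have hC0 : 0 ≤ C := by positivity
  refine summable_abs_iff.mp (Summable.of_nonneg_of_le (fun k => abs_nonneg _)
    (fun k => ?_) ((summable_base y).mul_left C))
  have hp := poch_pos ha (k + 1)
  have hpg := poch_ge ha k
  have hD : |digamma (((k : ℝ) + 1) + a)| ≤ (|digamma a| + 1 / a) * ((k : ℝ) + 1) := by
    have h1 : ((k : ℝ) + 1) + a = a + ((k + 1 : ℕ) : ℝ) := by push_cast; ring
    rw [h1]
    refine (abs_digamma_nat_add ha (k + 1)).trans ?_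
    have hk1 : (1:ℝ) ≤ (k:ℝ) + 1 := by
      have := Nat.cast_nonneg (α := ℝ) k; linarith
    have h2 : ((k+1 : ℕ) : ℝ) / a = (1/a) * ((k:ℝ)+1) := by push_cast; ring
    rw [h2]
    nlinarith [abs_nonneg (digamma a), div_nonneg (zero_le_one) ha.le]
  rw [abs_div, abs_mul, abs_pow, abs_of_pos hp]
  have hf : (0:ℝ) < k.factorial := by positivity
  calc |y| ^ (k+1) * |digamma (((k : ℝ) + 1) + a)| / (ascPochhammer ℝ (k + 1)).eval a
      ≤ |y| ^ (k+1) * ((|digamma a| + 1 / a) * ((k : ℝ) + 1)) / (a * k.factorial) := by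
        gcongr
    _ = C * (((k:ℝ) + 1) * |y| ^ (k+1) / k.factorial) := by
        rw [hC]; field_simp
    _ ≤ C * ((2 * |y|) ^ (k + 1) / k.factorial) := by
        rw [mul_pow]
        gcongr
        exact np1_le k

lemma summable_Sterm {a : ℝ} (ha : 0 < a) (y : ℝ) :
    Summable (fun k : ℕ =>
      y ^ (k + 1) / (((k : ℝ) + a) * (ascPochhammer ℝ (k + 1)).eval a)) := by
  refine summable_abs_iff.mp (Summable.of_nonneg_of_le (fun k => abs_nonneg _)
    (fun k => ?_) ((summable_base y).mul_left (1 / (a * a))))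
  have hp := poch_pos ha (k + 1)
  have hpg := poch_ge ha k
  have hka : (0:ℝ) < (k:ℝ) + a := by positivity
  have hf : (0:ℝ) < k.factorial := by positivity
  rw [abs_div, abs_pow, abs_of_pos (mul_pos hka hp)]
  calc |y| ^ (k+1) / (((k : ℝ) + a) * (ascPochhammer ℝ (k + 1)).eval a)
      ≤ |y| ^ (k+1) / (a * (a * k.factorial)) := by
        gcongr
        · linarith [Nat.cast_nonneg (α := ℝ) k]
    _ ≤ 1 / (a * a) * ((2 * |y|) ^ (k + 1) / k.factorial) := by
        rw [mul_pow]
        have h1 : |y| ^ (k+1) ≤ 2 ^ (k+1) * |y| ^ (k+1) := by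
          have : (1:ℝ) ≤ 2 ^ (k+1) := one_le_pow₀ (by norm_num)
          nlinarith [pow_nonneg (abs_nonneg y) (k+1)]
        rw [div_le_iff₀ (by positivity)]
        have expand : 1 / (a * a) * (2 ^ (k+1) * |y| ^ (k+1) / ↑k.factorial) * (a * (a * ↑k.factorial))
            = 2 ^ (k+1) * |y| ^ (k+1) := by field_simp
        rw [expand]
        exact h1

lemma pointwise_key (q h n : ℕ) (hh : h < q) (x : ℝ) (hx : x ≠ 0) :
    -(digamma ((((q * n + (q - 1 - h) : ℕ) : ℝ) + 1) / q) * x ^ ((q * n + (q - 1 - h)) + 1) /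
        ((((q * n + (q - 1 - h) : ℕ) : ℝ) + 1) *
          Real.Gamma ((((q * n + (q - 1 - h) : ℕ) : ℝ) + 1) / q))) =
      x ^ (-(h : ℤ)) / ((q : ℝ) * Real.Gamma (1 - (h : ℝ) / q)) *
        ((x ^ q) ^ (n + 1) /
            (((n : ℝ) + (1 - (h : ℝ) / q)) * (ascPochhammer ℝ (n + 1)).eval (1 - (h : ℝ) / q)) -
          (x ^ q) ^ (n + 1) * digamma (((n : ℝ) + 1) + (1 - (h : ℝ) / q)) /
            (ascPochhammer ℝ (n + 1)).eval (1 - (h : ℝ) / q)) := by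
  have hq0 : 0 < q := lt_of_le_of_lt (Nat.zero_le h) hh
  have hqR : (0 : ℝ) < q := by exact_mod_cast hq0
  set a : ℝ := 1 - (h : ℝ) / q with ha_def
  have ha : 0 < a := by
    have : (h : ℝ) < q := by exact_mod_cast hh
    rw [ha_def, sub_pos, div_lt_one hqR]
    exact this
  have hna : (0 : ℝ) < (n : ℝ) + a := by positivity
  set r := q - 1 - h with hr_def
  have hr : r + 1 + h = q := by omega
  have hrc : (r : ℝ) + 1 + h = q := by exact_mod_cast hr
  have hk1 : ((q * n + r : ℕ) : ℝ) + 1 = (q : ℝ) * ((n : ℝ) + a) := by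
    have hmul : (q : ℝ) * ((n : ℝ) + a) = q * n + q - h := by
      rw [ha_def]; field_simp; ring
    push_cast
    rw [hmul]; linarith
  have harg : (((q * n + r : ℕ) : ℝ) + 1) / q = (n : ℝ) + a := by
    rw [hk1, mul_div_cancel_left₀ _ hqR.ne']
  have hGamma : Real.Gamma ((n : ℝ) + a) = Real.Gamma a * (ascPochhammer ℝ n).eval a := by
    rw [show (n : ℝ) + a = a + n by ring]; exact Gamma_poch ha n
  have hrec : digamma ((n : ℝ) + a) = digamma (((n : ℝ) + 1) + a) - 1 / ((n : ℝ) + a) := by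
    have h1 := digamma_add_one hna
    rw [show (n : ℝ) + a + 1 = ((n : ℝ) + 1) + a by ring] at h1
    linarith
  have hpoch : (ascPochhammer ℝ (n + 1)).eval a = (ascPochhammer ℝ n).eval a * ((n : ℝ) + a) := by
    rw [ascPochhammer_succ_eval]; ring
  have hxq : (x ^ q) ^ (n + 1) = x ^ ((q * n + r) + 1) * x ^ h := by
    rw [← pow_mul, ← pow_add]; congr 1; rw [Nat.mul_succ]; omega
  have hzp : x ^ (-(h : ℤ)) = (x ^ h)⁻¹ := by rw [zpow_neg, zpow_natCast]
  have hΓa : Real.Gamma a ≠ 0 := (Real.Gamma_pos_of_pos ha).ne'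
  have hP : (ascPochhammer ℝ n).eval a ≠ 0 := (poch_pos ha n).ne'
  have hxh : x ^ h ≠ 0 := pow_ne_zero h hx
  have hxk : x ^ ((q * n + r) + 1) ≠ 0 := pow_ne_zero _ hx
  rw [harg, hGamma, hrec, hk1, hpoch, hxq, hzp]
  field_simp
  ring

/-- **Theorem 2.6**: for an integer `q ≥ 1` and real `x ≠ 0`,
`−∑_{k=1}^∞ ψ(k/q) x^k / (k Γ(k/q))
  = (1/q) ∑_{h=0}^{q−1} (x^{−h}/Γ(1 − h/q)) [S(1 − h/q, x^q) − Q(1 − h/q, x^q)]`. -/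
theorem integral_mittagLeffler_beta_deriv_inv_nat_zero (q : ℕ) (hq : 1 ≤ q) (x : ℝ)
    (hx : x ≠ 0) :
    -∑' k : ℕ,
        digamma (((k : ℝ) + 1) / q) * x ^ (k + 1) /
          (((k : ℝ) + 1) * Real.Gamma (((k : ℝ) + 1) / q)) =
      (1 / (q : ℝ)) *
        ∑ h ∈ Finset.range q,
          x ^ (-(h : ℤ)) / Real.Gamma (1 - (h : ℝ) / q) *
            (S (1 - (h : ℝ) / q) (x ^ q) - Q (1 - (h : ℝ) / q) (x ^ q)) := by
  have hq0 : 0 < q := hq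
  have hqR : (0 : ℝ) < q := by exact_mod_cast hq0
  set f : ℕ → ℝ := fun k =>
    digamma (((k : ℝ) + 1) / q) * x ^ (k + 1) /
      (((k : ℝ) + 1) * Real.Gamma (((k : ℝ) + 1) / q)) with hf
  set g : ℕ → ℕ → ℝ := fun h k => if k % q = q - 1 - h then -f k else 0 with hg
  set L : ℕ → ℝ := fun h =>
    x ^ (-(h : ℤ)) / ((q : ℝ) * Real.Gamma (1 - (h : ℝ) / q)) *
      (S (1 - (h : ℝ) / q) (x ^ q) - Q (1 - (h : ℝ) / q) (x ^ q)) with hL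
  have key : ∀ h ∈ Finset.range q, HasSum (g h) (L h) := by
    intro h hmem
    have hh : h < q := Finset.mem_range.mp hmem
    set a : ℝ := 1 - (h : ℝ) / q with ha_def
    have ha : 0 < a := by
      have : (h : ℝ) < q := by exact_mod_cast hh
      rw [ha_def, sub_pos, div_lt_one hqR]
      exact this
    have hS : HasSum
        (fun k : ℕ => (x ^ q) ^ (k + 1) / (((k : ℝ) + a) * (ascPochhammer ℝ (k + 1)).eval a))
        (S a (x ^ q)) := (summable_Sterm ha (x ^ q)).hasSum
    have hQ : HasSum
        (fun k : ℕ =>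
          (x ^ q) ^ (k + 1) * digamma (((k : ℝ) + 1) + a) / (ascPochhammer ℝ (k + 1)).eval a)
        (Q a (x ^ q)) := (summable_Qterm ha (x ^ q)).hasSum
    have hC := (hS.sub hQ).mul_left (x ^ (-(h : ℤ)) / ((q : ℝ) * Real.Gamma a))
    set ι : ℕ → ℕ := fun n => q * n + (q - 1 - h) with hι
    have hinj : Function.Injective ι := by
      intro m n hmn
      have h1 : q * m = q * n := by
        have := hmn
        simp only [hι] at this
        omega
      exact Nat.eq_of_mul_eq_mul_left hq0 h1
    have hvan : ∀ k ∉ Set.range ι, g h k = 0 := by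
      intro k hk
      rw [hg]
      simp only
      rw [if_neg]
      intro hmod
      exact hk ⟨k / q, by simp only [hι]; have := Nat.div_add_mod k q; omega⟩
    have hcomp : (fun n => g h (ι n)) = fun n : ℕ =>
        x ^ (-(h : ℤ)) / ((q : ℝ) * Real.Gamma a) *
          ((x ^ q) ^ (n + 1) / (((n : ℝ) + a) * (ascPochhammer ℝ (n + 1)).eval a) -
            (x ^ q) ^ (n + 1) * digamma (((n : ℝ) + 1) + a) /
              (ascPochhammer ℝ (n + 1)).eval a) := by
      funext n
      have hmod : (q * n + (q - 1 - h)) % q = q - 1 - h := by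
        rw [Nat.mul_add_mod]
        exact Nat.mod_eq_of_lt (by omega)
      rw [hg]
      simp only [hι]
      rw [if_pos hmod, hf]
      exact pointwise_key q h n hh x hx
    have hgsum : HasSum (g h) (x ^ (-(h : ℤ)) / ((q : ℝ) * Real.Gamma a) *
        (S a (x ^ q) - Q a (x ^ q))) := by
      refine (hinj.hasSum_iff hvan).mp ?_
      show HasSum (fun n => g h (ι n)) _
      rw [hcomp]
      exact hC
    rw [hL]
    exact hgsum
  have total : HasSum (fun k => ∑ h ∈ Finset.range q, g h k) (∑ h ∈ Finset.range q, L h) :=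
    hasSum_sum key
  have heq : (fun k => ∑ h ∈ Finset.range q, g h k) = fun k => -f k := by
    funext k
    have hkq : k % q < q := Nat.mod_lt k hq0
    have hstep : ∀ h ∈ Finset.range q, g h k = if h = q - 1 - k % q then -f k else 0 := by
      intro h hmem
      have hh : h < q := Finset.mem_range.mp hmem
      rw [hg]
      simp only
      refine if_congr ?_ rfl rfl
      omega
    rw [Finset.sum_congr rfl hstep, Finset.sum_ite_eq' (Finset.range q) (q - 1 - k % q)
      (fun _ => -f k), if_pos (Finset.mem_range.mpr (by omega))]
  rw [heq] at total
  have htsum : ∑' k, -f k = ∑ h ∈ Finset.range q, L h := total.tsum_eq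
  rw [tsum_neg] at htsum
  rw [htsum, hL, Finset.mul_sum]
  refine Finset.sum_congr rfl fun h hmem => ?_
  ring
end

section
/- Let q ≥ 1 be an integer and let β be a real number such that β + h/q is not a nonpositive integer for any h ∈ {0, 1, …, q−1}. Then for every real x, −∑_{k=0}^∞ k · ψ(k/q + β) x^k / Γ(k/q + β) = −∑_{h=0}^{q−1} (x^h / Γ(h/q + β)) · [ h·(ψ(h/q + β) + Q(h/q + β, x^q)) + q · x^q · P(h/q + β, x^q) ], where Q(a, y) = ∑_{k=1}^∞ y^k ψ(k + a)/(a)_k and P(a, y) = ∑_{k=1}^∞ k · y^{k−1} ψ(k + a)/(a)_k. (This is Theorem 5.3: the reduction formula for the derivative of the two-parameter Mittag-Leffler function with respect to α at α = 1/q, with P(a,y) = ∂Q(a,y)/∂y.) -/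
open scoped BigOperators

/-- `P(a, y) = ∑_{k=1}^∞ k y^{k−1} ψ(k + a)/(a)_k = ∂Q(a,y)/∂y`. -/
noncomputable def P (a y : ℝ) : ℝ :=
  ∑' k : ℕ,
    ((k : ℝ) + 1) * y ^ k * digamma (((k : ℝ) + 1) + a) / (ascPochhammer ℝ (k + 1)).eval a

lemma poch_ne_zero {a : ℝ} (ha : ∀ n : ℕ, a ≠ -(n : ℝ)) (m : ℕ) :
    (ascPochhammer ℝ m).eval a ≠ 0 := by
  induction m with
  | zero => simp [ascPochhammer_zero]
  | succ m ih =>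
    rw [ascPochhammer_succ_right]
    simp only [Polynomial.eval_mul, Polynomial.eval_add, Polynomial.eval_X,
      Polynomial.eval_natCast]
    refine mul_ne_zero ih fun h => ha m ?_
    linarith

lemma Gamma_nat_add {a : ℝ} (ha : ∀ n : ℕ, a ≠ -(n : ℝ)) (m : ℕ) :
    Real.Gamma ((m : ℝ) + a) = Real.Gamma a * (ascPochhammer ℝ m).eval a := by
  induction m with
  | zero => simp [ascPochhammer_zero]
  | succ m ih =>
    have h2 : (m : ℝ) + a ≠ 0 := fun h => ha m (by linarith)
    have h1 : ((m + 1 : ℕ) : ℝ) + a = ((m : ℝ) + a) + 1 := by push_cast; ring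
    rw [h1, Real.Gamma_add_one h2, ih, ascPochhammer_succ_right]
    simp only [Polynomial.eval_mul, Polynomial.eval_add, Polynomial.eval_X,
      Polynomial.eval_natCast]
    ring

lemma abs_digamma_le {t : ℝ} (ht : 2 ≤ t) : |digamma t| ≤ 2 * t := by
  have ht0 : (0 : ℝ) < t := by linarith
  have hΓt : 0 < Real.Gamma t := Real.Gamma_pos_of_pos ht0
  have hΓt1 : 0 < Real.Gamma (t - 1) := Real.Gamma_pos_of_pos (by linarith)
  have hd : DifferentiableAt ℝ Real.Gamma t :=
    Real.differentiableAt_Gamma fun m =>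
      ne_of_gt (lt_of_le_of_lt (neg_nonpos.mpr (Nat.cast_nonneg m)) ht0)
  have cv := Real.convexOn_Gamma
  have hup : deriv Real.Gamma t ≤ Real.Gamma (t + 1) - Real.Gamma t := by
    have h := cv.deriv_le_slope (Set.mem_Ioi.mpr ht0)
      (Set.mem_Ioi.mpr (by linarith : (0:ℝ) < t + 1)) (by linarith) hd
    rw [slope_def_field] at h
    calc deriv Real.Gamma t ≤ (Real.Gamma (t+1) - Real.Gamma t) / (t + 1 - t) := h
      _ = Real.Gamma (t + 1) - Real.Gamma t := by norm_num
  have hlo : Real.Gamma t - Real.Gamma (t - 1) ≤ deriv Real.Gamma t := by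
    have h := cv.slope_le_deriv (Set.mem_Ioi.mpr (by linarith : (0:ℝ) < t - 1))
      (Set.mem_Ioi.mpr ht0) (by linarith) hd
    rw [slope_def_field] at h
    calc Real.Gamma t - Real.Gamma (t-1) = (Real.Gamma t - Real.Gamma (t-1)) / (t - (t-1)) := by
          norm_num
      _ ≤ deriv Real.Gamma t := h
  have hG1 : Real.Gamma (t + 1) = t * Real.Gamma t := Real.Gamma_add_one ht0.ne'
  have hG2 : Real.Gamma t = (t - 1) * Real.Gamma (t - 1) := by
    have h := Real.Gamma_add_one (s := t - 1) (by intro h; linarith [h] : t - 1 ≠ 0)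
    rw [sub_add_cancel] at h
    exact h
  have hb : |deriv Real.Gamma t| ≤ 2 * t * Real.Gamma t := by
    rw [abs_le]
    constructor
    · have h3 : Real.Gamma (t - 1) ≤ 2 * t * Real.Gamma t := by nlinarith
      linarith
    · nlinarith
  have : |digamma t| = |deriv Real.Gamma t| / Real.Gamma t := by
    rw [digamma, abs_div, abs_of_pos hΓt]
  rw [this, div_le_iff₀ hΓt]
  calc |deriv Real.Gamma t| ≤ 2 * t * Real.Gamma t := hb
    _ = 2 * t * Real.Gamma t := rfl

lemma summable_master {a : ℝ} (ha : ∀ n : ℕ, a ≠ -(n : ℝ)) (y c d : ℝ) :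
    Summable (fun k : ℕ => (c + d * (k : ℝ)) * digamma (((k : ℝ) + 1) + a) * y ^ k /
      (ascPochhammer ℝ (k + 1)).eval a) := by
  set B : ℝ := |a| + |c| + |d| + 3 with hB
  have hB1 : (1 : ℝ) ≤ B := by
    have := abs_nonneg a; have := abs_nonneg c; have := abs_nonneg d
    rw [hB]; linarith
  have hBa : |a| + 1 ≤ B := by
    have := abs_nonneg c; have := abs_nonneg d
    rw [hB]; linarith
  have hBc : |c| ≤ B := by
    have := abs_nonneg a; have := abs_nonneg d
    rw [hB]; linarith
  have hBd : |d| ≤ B := by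
    have := abs_nonneg a; have := abs_nonneg c
    rw [hB]; linarith
  have hB0 : (0 : ℝ) < B := by linarith
  have hpoch : ∀ m : ℕ, (ascPochhammer ℝ m).eval a ≠ 0 := poch_ne_zero ha
  set M : ℕ → ℝ :=
    fun k => 2 * B * ((k : ℝ) + B) ^ 2 * |y| ^ k / |(ascPochhammer ℝ (k + 1)).eval a| with hM
  have hpk : ∀ k : ℕ, (0 : ℝ) < |(ascPochhammer ℝ (k + 1)).eval a| :=
    fun k => abs_pos.mpr (hpoch (k + 1))
  have hMnonneg : ∀ k : ℕ, 0 ≤ M k := by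
    intro k
    rw [hM]
    have h1 : (0:ℝ) ≤ 2 * B * ((k : ℝ) + B) ^ 2 * |y| ^ k :=
      mul_nonneg (mul_nonneg (by linarith) (sq_nonneg _)) (pow_nonneg (abs_nonneg y) k)
    exact div_nonneg h1 (hpk k).le
  have hpochsucc : ∀ k : ℕ, (ascPochhammer ℝ (k + 1 + 1)).eval a
      = (ascPochhammer ℝ (k + 1)).eval a * (a + ((k : ℝ) + 1)) := by
    intro k
    rw [ascPochhammer_succ_right]
    simp only [Polynomial.eval_mul, Polynomial.eval_add, Polynomial.eval_X,
      Polynomial.eval_natCast]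
    push_cast; ring
  have hMsum : Summable M := by
    apply summable_of_ratio_norm_eventually_le (r := (1/2 : ℝ)) (by norm_num)
    filter_upwards [Filter.eventually_ge_atTop (⌈8 * |y| + |a|⌉₊)] with k hk
    have hk' : 8 * |y| + |a| ≤ (k : ℝ) := by
      have := Nat.ceil_le.mp hk
      exact_mod_cast this
    have hA : (8 : ℝ) * |y| ≤ a + ((k : ℝ) + 1) := by
      have := neg_abs_le a
      linarith
    have hApos : (0 : ℝ) < a + ((k : ℝ) + 1) := by
      have := neg_abs_le a; have := abs_nonneg y
      linarith
    have hMk1 : M (k + 1) = 2 * B * ((k : ℝ) + 1 + B) ^ 2 * |y| ^ (k + 1) /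
        (|(ascPochhammer ℝ (k + 1)).eval a| * (a + ((k : ℝ) + 1))) := by
      rw [hM]
      simp only
      rw [hpochsucc k, abs_mul, abs_of_pos hApos]
      push_cast
      ring_nf
    rw [Real.norm_eq_abs, Real.norm_eq_abs, abs_of_nonneg (hMnonneg (k + 1)),
      abs_of_nonneg (hMnonneg k), hMk1]
    have hnum : 2 * B * ((k : ℝ) + 1 + B) ^ 2 * |y| ^ (k + 1)
        ≤ 1 / 2 * (2 * B * ((k : ℝ) + B) ^ 2 * |y| ^ k) * (a + ((k : ℝ) + 1)) := by
      have hsq : ((k : ℝ) + 1 + B) ^ 2 ≤ 4 * ((k : ℝ) + B) ^ 2 := by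
        nlinarith [Nat.cast_nonneg (α := ℝ) k]
      have c1 := mul_le_mul_of_nonneg_right
        (mul_le_mul_of_nonneg_left hsq (by linarith : (0:ℝ) ≤ 2 * B))
        (by positivity : (0:ℝ) ≤ |y| ^ k * |y|)
      have c2 := mul_le_mul_of_nonneg_left hA
        (by positivity : (0:ℝ) ≤ B * ((k : ℝ) + B) ^ 2 * |y| ^ k)
      calc 2 * B * ((k : ℝ) + 1 + B) ^ 2 * |y| ^ (k + 1)
          = 2 * B * ((k : ℝ) + 1 + B) ^ 2 * (|y| ^ k * |y|) := by ring
        _ ≤ 2 * B * (4 * ((k : ℝ) + B) ^ 2) * (|y| ^ k * |y|) := c1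
        _ = B * ((k : ℝ) + B) ^ 2 * |y| ^ k * (8 * |y|) := by ring
        _ ≤ B * ((k : ℝ) + B) ^ 2 * |y| ^ k * (a + ((k : ℝ) + 1)) := c2
        _ = 1 / 2 * (2 * B * ((k : ℝ) + B) ^ 2 * |y| ^ k) * (a + ((k : ℝ) + 1)) := by ring
    rw [div_le_iff₀ (mul_pos (hpk k) hApos)]
    have heq : 1 / 2 * (2 * B * ((k : ℝ) + B) ^ 2 * |y| ^ k /
          |(ascPochhammer ℝ (k + 1)).eval a|) *
          (|(ascPochhammer ℝ (k + 1)).eval a| * (a + ((k : ℝ) + 1)))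
        = 1 / 2 * (2 * B * ((k : ℝ) + B) ^ 2 * |y| ^ k) * (a + ((k : ℝ) + 1)) := by
      field_simp [(hpk k).ne']
    rw [heq]
    exact hnum
  refine Summable.of_norm_bounded_eventually_nat hMsum ?_
  filter_upwards [Filter.eventually_ge_atTop (⌈1 + |a|⌉₊)] with k hk
  have hk' : 1 + |a| ≤ (k : ℝ) := by
    have := Nat.ceil_le.mp hk
    exact_mod_cast this
  have ht : (2 : ℝ) ≤ (k : ℝ) + 1 + a := by
    have := neg_abs_le a; linarith
  have hψ := abs_digamma_le ht
  rw [Real.norm_eq_abs, abs_div, abs_mul, abs_mul, abs_pow, hM]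
  simp only
  rw [div_le_div_iff₀ (abs_pos.mpr (hpoch (k+1))) (hpk k)]
  have h1 : |c + d * (k : ℝ)| ≤ B * ((k : ℝ) + B) := by
    calc |c + d * (k : ℝ)| ≤ |c| + |d| * (k : ℝ) := by
          refine (abs_add_le _ _).trans ?_
          rw [abs_mul, Nat.abs_cast]
      _ ≤ B * ((k : ℝ) + B) := by nlinarith [Nat.cast_nonneg (α := ℝ) k, abs_nonneg c, abs_nonneg d]
  have h2 : |digamma (((k : ℝ) + 1) + a)| ≤ 2 * ((k : ℝ) + B) := by
    refine hψ.trans ?_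
    have := le_abs_self a
    linarith
  have h3 : |c + d * (k : ℝ)| * |digamma (((k : ℝ) + 1) + a)| * |y| ^ k
      ≤ 2 * B * ((k : ℝ) + B) ^ 2 * |y| ^ k := by
    calc |c + d * (k : ℝ)| * |digamma (((k : ℝ) + 1) + a)| * |y| ^ k
        ≤ (B * ((k : ℝ) + B)) * (2 * ((k : ℝ) + B)) * |y| ^ k := by
          refine mul_le_mul_of_nonneg_right ?_ (by positivity)
          exact mul_le_mul h1 h2 (abs_nonneg _) (by positivity)
      _ = 2 * B * ((k : ℝ) + B) ^ 2 * |y| ^ k := by ring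
  exact mul_le_mul_of_nonneg_right h3 (hpk k).le

lemma slice_eval {a : ℝ} (ha : ∀ n : ℕ, a ≠ -(n : ℝ)) (y : ℝ) (hnat qnat : ℕ) :
    Summable (fun m : ℕ => ((hnat : ℝ) + (qnat : ℝ) * (m : ℝ)) * digamma ((m : ℝ) + a) * y ^ m /
        (ascPochhammer ℝ m).eval a) ∧
    (∑' m : ℕ, ((hnat : ℝ) + (qnat : ℝ) * (m : ℝ)) * digamma ((m : ℝ) + a) * y ^ m /
        (ascPochhammer ℝ m).eval a)
      = (hnat : ℝ) * (digamma a + Q a y) + (qnat : ℝ) * y * P a y := by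
  have hQs : Summable (fun k : ℕ => y ^ (k + 1) * digamma (((k : ℝ) + 1) + a) /
      (ascPochhammer ℝ (k + 1)).eval a) := by
    have h := (summable_master ha y 1 0).mul_left y
    exact h.congr fun k => by push_cast; ring
  have hPs : Summable (fun k : ℕ => ((k : ℝ) + 1) * y ^ k * digamma (((k : ℝ) + 1) + a) /
      (ascPochhammer ℝ (k + 1)).eval a) :=
    (summable_master ha y 1 1).congr fun k => by push_cast; ring
  have hkey : ∀ k : ℕ,
      ((hnat : ℝ) + (qnat : ℝ) * ((k + 1 : ℕ) : ℝ)) * digamma (((k + 1 : ℕ) : ℝ) + a) *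
          y ^ (k + 1) / (ascPochhammer ℝ (k + 1)).eval a
        = (hnat : ℝ) * (y ^ (k + 1) * digamma (((k : ℝ) + 1) + a) /
            (ascPochhammer ℝ (k + 1)).eval a)
          + ((qnat : ℝ) * y) * (((k : ℝ) + 1) * y ^ k * digamma (((k : ℝ) + 1) + a) /
            (ascPochhammer ℝ (k + 1)).eval a) := by
    intro k; push_cast; ring
  have hg1 : Summable (fun k : ℕ =>
      ((hnat : ℝ) + (qnat : ℝ) * ((k + 1 : ℕ) : ℝ)) * digamma (((k + 1 : ℕ) : ℝ) + a) *
        y ^ (k + 1) / (ascPochhammer ℝ (k + 1)).eval a) := by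
    refine Summable.congr ?_ fun k => (hkey k).symm
    exact (hQs.mul_left _).add (hPs.mul_left _)
  have hg : Summable (fun m : ℕ => ((hnat : ℝ) + (qnat : ℝ) * (m : ℝ)) *
      digamma ((m : ℝ) + a) * y ^ m / (ascPochhammer ℝ m).eval a) :=
    (summable_nat_add_iff 1).mp hg1
  refine ⟨hg, ?_⟩
  have h2 : (∑' k : ℕ, ((hnat : ℝ) + (qnat : ℝ) * ((k + 1 : ℕ) : ℝ)) *
        digamma (((k + 1 : ℕ) : ℝ) + a) * y ^ (k + 1) / (ascPochhammer ℝ (k + 1)).eval a)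
      = (hnat : ℝ) * Q a y + ((qnat : ℝ) * y) * P a y := by
    rw [tsum_congr hkey, (hQs.mul_left _).tsum_add (hPs.mul_left _), tsum_mul_left,
      tsum_mul_left]
    rfl
  calc (∑' m : ℕ, ((hnat : ℝ) + (qnat : ℝ) * (m : ℝ)) * digamma ((m : ℝ) + a) * y ^ m /
          (ascPochhammer ℝ m).eval a)
      = ((hnat : ℝ) + (qnat : ℝ) * ((0 : ℕ) : ℝ)) * digamma (((0 : ℕ) : ℝ) + a) * y ^ (0 : ℕ) /
          (ascPochhammer ℝ 0).eval a
        + ∑' k : ℕ, ((hnat : ℝ) + (qnat : ℝ) * ((k + 1 : ℕ) : ℝ)) *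
            digamma (((k + 1 : ℕ) : ℝ) + a) * y ^ (k + 1) /
            (ascPochhammer ℝ (k + 1)).eval a := hg.tsum_eq_zero_add
    _ = (hnat : ℝ) * digamma a + ((hnat : ℝ) * Q a y + ((qnat : ℝ) * y) * P a y) := by
        rw [h2]
        simp [ascPochhammer_zero]
    _ = (hnat : ℝ) * (digamma a + Q a y) + (qnat : ℝ) * y * P a y := by ring

lemma summable_prod_fin {n : ℕ} {f : Fin n × ℕ → ℝ}
    (h : ∀ i : Fin n, Summable fun m => f (i, m)) : Summable f := by
  have hf : f = fun p => ∑ i : Fin n, if p.1 = i then f (i, p.2) else 0 := by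
    funext p
    rw [Finset.sum_eq_single p.1]
    · simp
    · intro b _ hb
      simp [Ne.symm hb]
    · intro hm
      exact absurd (Finset.mem_univ p.1) hm
  rw [hf]
  apply summable_sum
  intro i _
  have hinj : Function.Injective (fun m : ℕ => ((i, m) : Fin n × ℕ)) := by
    intro a b hab
    simpa using congrArg Prod.snd hab
  have hzero : ∀ p : Fin n × ℕ, p ∉ Set.range (fun m : ℕ => ((i, m) : Fin n × ℕ)) →
      (if p.1 = i then f (i, p.2) else 0) = 0 := by
    intro p hp
    by_cases hpi : p.1 = i
    · exact absurd ⟨p.2, by rw [← hpi]⟩ hp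
    · simp [hpi]
  refine (hinj.summable_iff hzero).mp ?_
  exact (h i).congr fun m => by simp

/-- **Theorem 5.3**: for an integer `q ≥ 1` and real `β` with `β + h/q` never a nonpositive
integer for `h ∈ {0,…,q−1}`, for every real `x`,
`−∑_{k=0}^∞ k ψ(k/q + β) x^k/Γ(k/q + β)
  = −∑_{h=0}^{q−1} (x^h/Γ(h/q + β)) [h (ψ(h/q + β) + Q(h/q + β, x^q)) + q x^q P(h/q + β, x^q)]`. -/
theorem mittagLeffler_alpha_deriv_inv_nat (q : ℕ) (hq : 1 ≤ q) (β : ℝ)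
    (hβ : ∀ h : ℕ, h < q → ∀ n : ℕ, β + (h : ℝ) / q ≠ -(n : ℝ)) (x : ℝ) :
    -∑' k : ℕ, (k : ℝ) * digamma ((k : ℝ) / q + β) * x ^ k / Real.Gamma ((k : ℝ) / q + β) =
      -∑ h ∈ Finset.range q,
        x ^ h / Real.Gamma ((h : ℝ) / q + β) *
          ((h : ℝ) * (digamma ((h : ℝ) / q + β) + Q ((h : ℝ) / q + β) (x ^ q)) +
            (q : ℝ) * x ^ q * P ((h : ℝ) / q + β) (x ^ q)) := by
  have hqne : q ≠ 0 := Nat.one_le_iff_ne_zero.mp hq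
  haveI : NeZero q := ⟨hqne⟩
  have hq0 : (q : ℝ) ≠ 0 := Nat.cast_ne_zero.mpr hqne
  have ha : ∀ h : ℕ, h < q → ∀ n : ℕ, (h : ℝ) / q + β ≠ -(n : ℝ) := by
    intro h hh n e
    exact hβ h hh n (by linarith)
  rw [neg_inj]
  set f : ℕ → ℝ :=
    fun k => (k : ℝ) * digamma ((k : ℝ) / q + β) * x ^ k / Real.Gamma ((k : ℝ) / q + β) with hf
  set E : Fin q × ℕ ≃ ℕ := (Equiv.prodComm (Fin q) ℕ).trans (Nat.divModEquiv q).symm with hE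
  have hEap : ∀ (h : Fin q) (m : ℕ), E (h, m) = m * q + (h : ℕ) := fun _ _ => rfl
  have key : ∀ h : ℕ, h < q → ∀ m : ℕ, f (m * q + h)
      = x ^ h / Real.Gamma ((h : ℝ) / q + β) *
          (((h : ℝ) + (q : ℝ) * (m : ℝ)) * digamma ((m : ℝ) + ((h : ℝ) / q + β)) *
            (x ^ q) ^ m / (ascPochhammer ℝ m).eval ((h : ℝ) / q + β)) := by
    intro h hh m
    have harg : ((m * q + h : ℕ) : ℝ) / q + β = (m : ℝ) + ((h : ℝ) / q + β) := by
      push_cast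
      field_simp
      ring
    have hxp : x ^ (m * q + h) = (x ^ q) ^ m * x ^ h := by
      rw [pow_add, mul_comm m q, pow_mul]
    simp only [hf]
    rw [harg, hxp, Gamma_nat_add (ha h hh) m]
    push_cast
    ring
  have hslice := fun h : Fin q => slice_eval (ha h h.2) (x ^ q) h q
  have hsum : Summable fun p : Fin q × ℕ => f (E p) := by
    apply summable_prod_fin
    intro h
    have hs := ((hslice h).1.mul_left (x ^ (h : ℕ) / Real.Gamma (((h : ℕ) : ℝ) / q + β)))
    refine hs.congr fun m => ?_
    rw [hEap]
    exact (key h h.2 m).symm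
  calc ∑' k : ℕ, f k
      = ∑' p : Fin q × ℕ, f (E p) := (E.tsum_eq f).symm
    _ = ∑' (h : Fin q), ∑' m : ℕ, f (E (h, m)) := hsum.tsum_prod' fun h => hsum.prod_factor h
    _ = ∑ h : Fin q, ∑' m : ℕ, f (E (h, m)) := tsum_fintype _
    _ = ∑ h : Fin q, x ^ (h : ℕ) / Real.Gamma (((h : ℕ) : ℝ) / q + β) *
          ((((h : ℕ) : ℝ)) * (digamma (((h : ℕ) : ℝ) / q + β) +
              Q (((h : ℕ) : ℝ) / q + β) (x ^ q)) +
            (q : ℝ) * x ^ q * P (((h : ℕ) : ℝ) / q + β) (x ^ q)) := by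
        refine Finset.sum_congr rfl fun h _ => ?_
        calc ∑' m : ℕ, f (E (h, m))
            = ∑' m : ℕ, x ^ (h : ℕ) / Real.Gamma (((h : ℕ) : ℝ) / q + β) *
                ((((h : ℕ) : ℝ) + (q : ℝ) * (m : ℝ)) *
                  digamma ((m : ℝ) + (((h : ℕ) : ℝ) / q + β)) *
                  (x ^ q) ^ m / (ascPochhammer ℝ m).eval (((h : ℕ) : ℝ) / q + β)) := by
              refine tsum_congr fun m => ?_
              rw [hEap]
              exact key h h.2 m
          _ = x ^ (h : ℕ) / Real.Gamma (((h : ℕ) : ℝ) / q + β) *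
              ∑' m : ℕ, ((((h : ℕ) : ℝ) + (q : ℝ) * (m : ℝ)) *
                  digamma ((m : ℝ) + (((h : ℕ) : ℝ) / q + β)) *
                  (x ^ q) ^ m / (ascPochhammer ℝ m).eval (((h : ℕ) : ℝ) / q + β)) :=
              tsum_mul_left
          _ = _ := by rw [(hslice h).2]
    _ = ∑ h ∈ Finset.range q,
        x ^ h / Real.Gamma ((h : ℝ) / q + β) *
          ((h : ℝ) * (digamma ((h : ℝ) / q + β) + Q ((h : ℝ) / q + β) (x ^ q)) +
            (q : ℝ) * x ^ q * P ((h : ℝ) / q + β) (x ^ q)) :=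
        Fin.sum_univ_eq_sum_range
          (fun h => x ^ h / Real.Gamma ((h : ℝ) / q + β) *
            ((h : ℝ) * (digamma ((h : ℝ) / q + β) + Q ((h : ℝ) / q + β) (x ^ q)) +
              (q : ℝ) * x ^ q * P ((h : ℝ) / q + β) (x ^ q))) q
end
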